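/- For any unit quaternion (η̃, q̃) and any vector r ∈ R^3, with R̃ = I + 2S(q̃)² − 2η̃S(q̃), the identity q̃^T S(r) R̃ r = 2 η̃ q̃^T S(r)² q̃ holds. -/

import Mathlib

open Matrix

noncomputable section

/-- The skew-symmetric (cross-product) matrix `S(x)`, satisfying `S(x) y = x × y`. -/
def sk (x : Fin 3 → ℝ) : Matrix (Fin 3) (Fin 3) ℝ :=
  !![0, -x 2, x 1; x 2, 0, -x 0; -x 1, x 0, 0]

/-- The Euclidean norm of a vector in ℝ³. -/
def vnorm (x : Fin 3 → ℝ) : ℝ := Real.sqrt (x ⬝ᵥ x)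

/-- The Rodrigues map `R(Q) = I + 2 S(q)² - 2 η S(q)`. -/
def rod (η : ℝ) (q : Fin 3 → ℝ) : Matrix (Fin 3) (Fin 3) ℝ :=
  1 + (2 : ℝ) • sk q ^ 2 - (2 * η) • sk q

theorem quaternion_skew_identity (ηt : ℝ) (qt : Fin 3 → ℝ)
    (hQ : ηt ^ 2 + vnorm qt ^ 2 = 1) (r : Fin 3 → ℝ) :
    qt ⬝ᵥ (sk r).mulVec ((rod ηt qt).mulVec r) =
      2 * ηt * (qt ⬝ᵥ (sk r ^ 2).mulVec qt) := by
  simp [sk, rod, mulVec, dotProduct, Fin.sum_univ_three, pow_two, Matrix.mul_apply, Matrix.one_apply, vecHead, vecTail]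
  ring
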